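/- arXiv:1908.09196 — 2 statements merged into one kernel-verified Lean document; each statement's English description precedes it below -/
import Mathlib

section
/- Let μ ≥ 1 be an integer. The set of formal power series s ∈ ℂ[[t]] with ord(s) = 1 satisfying t^{μ+1}·s'(t) = s(t)^{μ+1} is infinite. -/
open PowerSeries

lemma coeff_derivativeFun' (f : PowerSeries ℂ) (n : ℕ) :
    PowerSeries.coeff n f.derivativeFun = PowerSeries.coeff (n + 1) f * (n + 1) :=
  PowerSeries.coeff_derivative f n

lemma derivativeFun_C' (r : ℂ) : (PowerSeries.C r : PowerSeries ℂ).derivativeFun = 0 :=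
  PowerSeries.derivative_C

/-- Coefficients of the solution's unit part, defined by the recursion forced by the
linear ODE `(1 + b X^(m+1)) u' = -b X^m u`. -/
noncomputable def ucoef (m : ℕ) (b : ℂ) : ℕ → ℂ
  | 0 => 1
  | (n + 1) =>
      if m ≤ n then (-b) * (((n - m : ℕ) : ℂ) + 1) / ((n : ℂ) + 1) * ucoef m b (n - m) else 0
  decreasing_by omega

noncomputable def useries (m : ℕ) (b : ℂ) : PowerSeries ℂ := PowerSeries.mk (ucoef m b)

lemma ucoef_zero (m : ℕ) (b : ℂ) : ucoef m b 0 = 1 := by simp [ucoef]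

lemma coeff_useries (m : ℕ) (b : ℂ) (n : ℕ) :
    (PowerSeries.coeff n) (useries m b) = ucoef m b n := by
  simp [useries]

lemma deriv_pow_aux (f : PowerSeries ℂ) (k : ℕ) :
    (f ^ (k + 1)).derivativeFun
      = PowerSeries.C ((k : ℂ) + 1) * f ^ k * f.derivativeFun := by
  induction k with
  | zero => simp
  | succ k ih =>
      have h2 : f ^ (k + 1 + 1) = f * f ^ (k + 1) := by ring
      rw [h2, PowerSeries.derivativeFun_mul, ih]
      have hC : PowerSeries.C (((k : ℕ) + 1 : ℕ) + 1 : ℂ)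
          = PowerSeries.C ((k : ℂ) + 1) + 1 := by
        push_cast
        rw [map_add, map_one]
      push_cast at hC ⊢
      rw [hC]
      simp only [smul_eq_mul]
      ring

lemma derivativeFun_X' : (PowerSeries.X : PowerSeries ℂ).derivativeFun = 1 := by
  ext n
  rw [coeff_derivativeFun']
  rcases n with _ | n <;> simp [PowerSeries.coeff_X, PowerSeries.coeff_one]

/-- The key linear ODE satisfied by `useries`. -/
lemma useries_ode (m : ℕ) (b : ℂ) :
    (1 + PowerSeries.C b * PowerSeries.X ^ (m + 1)) * (useries m b).derivativeFun
      = -(PowerSeries.C b) * PowerSeries.X ^ m * useries m b := by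
  set u := useries m b with hu
  ext n
  rw [show (1 + PowerSeries.C b * PowerSeries.X ^ (m + 1)) * u.derivativeFun
      = u.derivativeFun + PowerSeries.C b * (PowerSeries.X ^ (m + 1) * u.derivativeFun)
      from by ring]
  rw [show -(PowerSeries.C b) * PowerSeries.X ^ m * u
      = -(PowerSeries.C b * (PowerSeries.X ^ m * u)) from by ring]
  rw [map_add, map_neg, PowerSeries.coeff_C_mul, PowerSeries.coeff_C_mul,
    PowerSeries.coeff_X_pow_mul', PowerSeries.coeff_X_pow_mul',
    coeff_derivativeFun', hu, coeff_useries]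
  have hne : ((n : ℂ) + 1) ≠ 0 := Nat.cast_add_one_ne_zero n
  rcases lt_or_ge n m with h | h
  · rw [if_neg (by omega), if_neg (by omega)]
    have h0 : ucoef m b (n + 1) = 0 := by rw [ucoef, if_neg (by omega)]
    simp [h0]
  · rcases eq_or_lt_of_le h with rfl | h2
    · rw [if_neg (by omega), if_pos le_rfl]
      have h0 : ucoef m b (m + 1)
          = (-b) * (((m - m : ℕ) : ℂ) + 1) / ((m : ℂ) + 1) * ucoef m b (m - m) := by
        rw [ucoef, if_pos le_rfl]
      rw [h0]
      simp only [Nat.sub_self, Nat.cast_zero, coeff_useries]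
      field_simp
      try ring
    · have hm1 : m + 1 ≤ n := h2
      rw [if_pos hm1, if_pos h]
      rw [coeff_derivativeFun', coeff_useries]
      have hrw : n - (m + 1) + 1 = n - m := by omega
      rw [hrw]
      have h0 : ucoef m b (n + 1)
          = (-b) * (((n - m : ℕ) : ℂ) + 1) / ((n : ℂ) + 1) * ucoef m b (n - m) := by
        rw [ucoef, if_pos h]
      rw [h0]
      have hcast : ((n - (m + 1) : ℕ) : ℂ) + 1 = ((n - m : ℕ) : ℂ) := by
        rw [Nat.cast_sub hm1, Nat.cast_sub h]
        push_cast
        ring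
      rw [hcast]
      simp only [coeff_useries]
      field_simp
      ring

lemma eq_one_of_deriv_zero (f : PowerSeries ℂ) (h : f.derivativeFun = 0)
    (h0 : PowerSeries.constantCoeff f = 1) : f = 1 := by
  ext n
  rcases n with _ | n
  · simpa [PowerSeries.coeff_zero_eq_constantCoeff] using h0
  · have h1 := congrArg (PowerSeries.coeff n) h
    rw [coeff_derivativeFun'] at h1
    simp only [map_zero] at h1
    have hne : ((n : ℂ) + 1) ≠ 0 := Nat.cast_add_one_ne_zero n
    have h2 : PowerSeries.coeff (n + 1) f = 0 := by
      rcases mul_eq_zero.mp h1 with h3 | h3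
      · exact h3
      · exact absurd h3 hne
    rw [h2, PowerSeries.coeff_one, if_neg (Nat.succ_ne_zero n)]

/-- The nonlinear relation: `u^(m+1) * (1 + b X^(m+1)) = 1`. -/
lemma useries_pow (m : ℕ) (b : ℂ) :
    (useries m b) ^ (m + 1) * (1 + PowerSeries.C b * PowerSeries.X ^ (m + 1)) = 1 := by
  set u := useries m b with hu
  set v : PowerSeries ℂ := 1 + PowerSeries.C b * PowerSeries.X ^ (m + 1) with hv
  have hode := useries_ode m b
  rw [← hu, ← hv] at hode
  apply eq_one_of_deriv_zero
  · have hXpow : ((PowerSeries.X : PowerSeries ℂ) ^ (m + 1)).derivativeFun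
        = PowerSeries.C ((m : ℂ) + 1) * PowerSeries.X ^ m := by
      rw [deriv_pow_aux, derivativeFun_X', mul_one]
    have hv' : v.derivativeFun
        = PowerSeries.C b * (PowerSeries.C ((m : ℂ) + 1) * PowerSeries.X ^ m) := by
      rw [hv, PowerSeries.derivativeFun_add, PowerSeries.derivativeFun_one, zero_add,
        PowerSeries.derivativeFun_mul, derivativeFun_C', hXpow]
      simp only [smul_eq_mul, mul_zero, add_zero]
      try ring
    rw [PowerSeries.derivativeFun_mul, hv', deriv_pow_aux]
    simp only [smul_eq_mul]
    have expand : u ^ (m + 1) * (PowerSeries.C b * (PowerSeries.C ((m : ℂ) + 1)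
            * PowerSeries.X ^ m))
        + v * (PowerSeries.C ((m : ℂ) + 1) * u ^ m * u.derivativeFun)
        = PowerSeries.C ((m : ℂ) + 1) * u ^ m
            * (PowerSeries.C b * PowerSeries.X ^ m * u + v * u.derivativeFun) := by
      ring
    rw [expand, hode]
    try ring
  · simp [hu, hv, useries, map_pow, PowerSeries.constantCoeff_mk, ucoef_zero]

/-- The solution family. -/
noncomputable def ssol (m : ℕ) (b : ℂ) : PowerSeries ℂ := PowerSeries.X * useries m b

lemma ssol_mem (m : ℕ) (b : ℂ) :
    (ssol m b).order = 1 ∧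
      PowerSeries.X ^ (m + 1 + 1) * (ssol m b).derivativeFun = (ssol m b) ^ (m + 1 + 1) := by
  set u := useries m b with hu
  set v : PowerSeries ℂ := 1 + PowerSeries.C b * PowerSeries.X ^ (m + 1) with hv
  have hv0 : v ≠ 0 := by
    intro h
    have h1 := congrArg (PowerSeries.constantCoeff) h
    simp [hv] at h1
  constructor
  · have h1 : (ssol m b).order = ((1 : ℕ) : ℕ∞) := by
      rw [PowerSeries.order_eq_nat]
      constructor
      · rw [ssol, show (1 : ℕ) = 0 + 1 from rfl, PowerSeries.coeff_succ_X_mul, ← hu,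
          coeff_useries, ucoef_zero]
        exact one_ne_zero
      · intro i hi
        interval_cases i
        simp [ssol, PowerSeries.coeff_zero_eq_constantCoeff, map_mul]
    simpa using h1
  · have hder : (ssol m b).derivativeFun = PowerSeries.X * u.derivativeFun + u := by
      rw [ssol, PowerSeries.derivativeFun_mul, derivativeFun_X', ← hu]
      simp only [smul_eq_mul]
      ring
    have key : PowerSeries.X * u.derivativeFun + u = u ^ (m + 1 + 1) := by
      have hode := useries_ode m b
      rw [← hu, ← hv] at hode
      have hpow := useries_pow m b
      rw [← hu, ← hv] at hpow
      have h1 : (PowerSeries.X * u.derivativeFun + u) * v = u := by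
        have h2 : (PowerSeries.X * u.derivativeFun + u) * v
            = PowerSeries.X * (v * u.derivativeFun) + u * v := by ring
        rw [h2, hode, hv]
        ring
      have h2 : u ^ (m + 1 + 1) * v = u := by
        calc u ^ (m + 1 + 1) * v = u * (u ^ (m + 1) * v) := by ring
        _ = u := by rw [hpow]; ring
      have h3 : (PowerSeries.X * u.derivativeFun + u - u ^ (m + 1 + 1)) * v = 0 := by
        rw [sub_mul, h1, h2, sub_self]
      rcases mul_eq_zero.mp h3 with h4 | h4
      · linear_combination h4
      · exact absurd h4 hv0
    rw [hder, ssol, mul_pow, ← hu, ← key]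

/-- For `μ ≥ 1`, there are infinitely many order-one formal power series `s`
satisfying `t^{μ+1} s'(t) = s(t)^{μ+1}`. -/
theorem infinitely_many_order_one_solutions (μ : ℕ) (hμ : 1 ≤ μ) :
    {s : PowerSeries ℂ | s.order = 1 ∧
      PowerSeries.X ^ (μ + 1) * s.derivativeFun = s ^ (μ + 1)}.Infinite := by
  obtain ⟨m, rfl⟩ : ∃ m, μ = m + 1 := ⟨μ - 1, by omega⟩
  apply Set.infinite_of_injective_forall_mem (f := ssol m)
  · intro b₁ b₂ hb
    have h1 := congrArg (PowerSeries.coeff (m + 1 + 1)) hb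
    rw [ssol, ssol, PowerSeries.coeff_succ_X_mul, PowerSeries.coeff_succ_X_mul,
      coeff_useries, coeff_useries] at h1
    have erw1 : ∀ b : ℂ, ucoef m b (m + 1)
        = (-b) * (((m - m : ℕ) : ℂ) + 1) / ((m : ℂ) + 1) * ucoef m b (m - m) := by
      intro b; rw [ucoef, if_pos le_rfl]
    rw [erw1, erw1] at h1
    simp only [Nat.sub_self, Nat.cast_zero, ucoef_zero, zero_add, mul_one] at h1
    have hne : ((m : ℂ) + 1) ≠ 0 := Nat.cast_add_one_ne_zero m
    field_simp at h1
    exact neg_inj.mp h1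
  · intro b
    exact ssol_mem m b
end

section
/- Let f, g, f̃, g̃ ∈ ℂ[[t,z]] with g(0,0) ≠ 0, f(0,0) = f̃(0,0) = 0, and such that λ := (∂f/∂z)(0,0)/g(0,0) is not a positive integer. Let m ≥ 1 be an integer and assume f_{i,j} = f̃_{i,j} and g_{i,j} = g̃_{i,j} for all pairs (i,j) with i + j ≤ m (in particular g̃(0,0) = g(0,0) ≠ 0 and (∂f̃/∂z)(0,0)/g̃(0,0) = λ). Let z and z̃ be the unique power series with zero constant term satisfying g(t,z(t))·t·z'(t) = f(t,z(t)) and g̃(t,z̃(t))·t·z̃'(t) = f̃(t,z̃(t)), respectively. Then coeff_i(z) = coeff_i(z̃) for all i ≤ m. -/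
/-- The coefficient `f_{i,j}` of `t^i z^j` in a two-variable formal power series,
where variable `0` is `t` and variable `1` is `z`. -/
noncomputable def fcoeff (f : MvPowerSeries (Fin 2) ℂ) (i j : ℕ) : ℂ :=
  MvPowerSeries.coeff (Finsupp.single 0 i + Finsupp.single 1 j) f

/-- Substitution `f(t, z(t))` (intended for `z` with zero constant term, in which
case `coeff n (X^i * z^j) = 0` for `i + j > n`). -/
noncomputable def subst2 (f : MvPowerSeries (Fin 2) ℂ) (z : PowerSeries ℂ) : PowerSeries ℂ :=
  PowerSeries.mk fun n => ∑ i ∈ Finset.range (n + 1), ∑ j ∈ Finset.range (n + 1),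
    fcoeff f i j * (PowerSeries.coeff n) (PowerSeries.X ^ i * z ^ j)

open PowerSeries Finset

private lemma coeff_pow_congr {z zt : PowerSeries ℂ} {N : ℕ}
    (h : ∀ k ≤ N, coeff k z = coeff k zt) (j : ℕ) :
    ∀ l ≤ N, coeff l (z ^ j) = coeff l (zt ^ j) := by
  induction j with
  | zero => intro l _; simp
  | succ j ih =>
    intro l hl
    rw [pow_succ, pow_succ, coeff_mul, coeff_mul]
    refine Finset.sum_congr rfl fun p hp => ?_
    rw [Finset.HasAntidiagonal.mem_antidiagonal] at hp
    rw [ih p.1 (by omega), h p.2 (by omega)]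

private lemma coeff_pow_lt {z : PowerSeries ℂ} (hz : constantCoeff z = 0) :
    ∀ j l, l < j → coeff l (z ^ j) = 0 := by
  intro j
  induction j with
  | zero => intro l hl; omega
  | succ j ih =>
    intro l hl
    rw [pow_succ, coeff_mul]
    refine Finset.sum_eq_zero fun p hp => ?_
    rw [Finset.HasAntidiagonal.mem_antidiagonal] at hp
    by_cases h2 : p.2 = 0
    · rw [h2, coeff_zero_eq_constantCoeff, hz, mul_zero]
    · rw [ih p.1 (by omega), zero_mul]

private lemma coeff_hi {z : PowerSeries ℂ} (hz : constantCoeff z = 0) {i j n : ℕ}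
    (h : n < i + j) : coeff n (X ^ i * z ^ j : PowerSeries ℂ) = 0 := by
  rw [coeff_X_pow_mul']
  split_ifs with hin
  · exact coeff_pow_lt hz j (n - i) (by omega)
  · rfl

private lemma coeff_pow_ge_two {z zt : PowerSeries ℂ} {n : ℕ}
    (hz : constantCoeff z = 0) (hzt : constantCoeff zt = 0)
    (hlow : ∀ k < n, coeff k z = coeff k zt) {j : ℕ} (hj : 2 ≤ j) :
    coeff n (z ^ j) = coeff n (zt ^ j) := by
  obtain ⟨j', rfl⟩ : ∃ j', j = j' + 1 := ⟨j - 1, by omega⟩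
  rw [pow_succ, pow_succ, coeff_mul, coeff_mul]
  refine Finset.sum_congr rfl fun p hp => ?_
  rw [Finset.HasAntidiagonal.mem_antidiagonal] at hp
  by_cases h2 : p.2 = 0
  · rw [h2, coeff_zero_eq_constantCoeff, hz, hzt, mul_zero, mul_zero]
  by_cases h1 : p.1 = 0
  · rw [h1, coeff_pow_lt hz j' 0 (by omega), coeff_pow_lt hzt j' 0 (by omega),
      zero_mul, zero_mul]
  · rw [coeff_pow_congr (N := n - 1) (fun k hk => hlow k (by omega)) j' p.1 (by omega),
      hlow p.2 (by omega)]

private lemma coeff_X_mul_deriv (z : PowerSeries ℂ) (b : ℕ) :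
    coeff b (X * z.derivativeFun) = (b : ℂ) * coeff b z := by
  cases b with
  | zero => simp
  | succ b =>
    rw [← pow_one (X : PowerSeries ℂ), coeff_X_pow_mul', if_pos (by omega),
      Nat.succ_sub_one, show z.derivativeFun = derivative ℂ z from rfl, coeff_derivative]
    push_cast; ring

private lemma subst2_coeff_zero (f : MvPowerSeries (Fin 2) ℂ) (z : PowerSeries ℂ) :
    coeff 0 (subst2 f z) = fcoeff f 0 0 := by
  simp [subst2]

private lemma subst2_coeff_congr {g gt : MvPowerSeries (Fin 2) ℂ} {z zt : PowerSeries ℂ} {m : ℕ}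
    (hga : ∀ i j, i + j ≤ m → fcoeff g i j = fcoeff gt i j)
    (hz : constantCoeff z = 0) (hzt : constantCoeff zt = 0)
    {a : ℕ} (ham : a ≤ m)
    (hlow : ∀ k ≤ a, coeff k z = coeff k zt) :
    coeff a (subst2 g z) = coeff a (subst2 gt zt) := by
  simp only [subst2, coeff_mk]
  refine Finset.sum_congr rfl fun i hi => Finset.sum_congr rfl fun j hj => ?_
  by_cases hij : i + j ≤ a
  · rw [hga i j (le_trans hij ham)]
    congr 1
    rw [coeff_X_pow_mul', coeff_X_pow_mul']
    split_ifs with h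
    · exact coeff_pow_congr (N := a) hlow j _ (by omega)
    · rfl
  · rw [coeff_hi hz (by omega), coeff_hi hzt (by omega), mul_zero, mul_zero]

/-- Briot–Bouquet, finite determinacy: if the coefficients of `(f, g)` and
`(f̃, g̃)` agree up to total degree `m`, with `g(0,0) ≠ 0`, `f(0,0) = f̃(0,0) = 0`
and `λ = f_{0,1}/g_{0,0}` not a positive integer, then the unique solutions `z`,
`z̃` with zero constant term of the respective Briot–Bouquet equations agree in
all coefficients of index `≤ m`. -/
theorem briot_bouquet_finite_determinacy
    (f g ft gt : MvPowerSeries (Fin 2) ℂ)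
    (hg : fcoeff g 0 0 ≠ 0) (hf : fcoeff f 0 0 = 0) (hft : fcoeff ft 0 0 = 0)
    (hlambda : ∀ k : ℕ, 1 ≤ k → fcoeff f 0 1 / fcoeff g 0 0 ≠ (k : ℂ))
    (m : ℕ) (hm : 1 ≤ m)
    (hfa : ∀ i j : ℕ, i + j ≤ m → fcoeff f i j = fcoeff ft i j)
    (hga : ∀ i j : ℕ, i + j ≤ m → fcoeff g i j = fcoeff gt i j) :
    ∀ z zt : PowerSeries ℂ,
      PowerSeries.constantCoeff z = 0 →
      subst2 g z * (PowerSeries.X * z.derivativeFun) = subst2 f z →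
      PowerSeries.constantCoeff zt = 0 →
      subst2 gt zt * (PowerSeries.X * zt.derivativeFun) = subst2 ft zt →
      ∀ i : ℕ, i ≤ m → PowerSeries.coeff i z = PowerSeries.coeff i zt := by
  intro z zt hz hzeq hzt hzteq
  have key : ∀ (G : MvPowerSeries (Fin 2) ℂ) (w : PowerSeries ℂ) (n : ℕ), 1 ≤ n →
      coeff n (subst2 G w * (X * w.derivativeFun))
        = fcoeff G 0 0 * ((n : ℂ) * coeff n w)
          + ∑ a ∈ range n, coeff (a + 1) (subst2 G w)
              * (((n - (a + 1) : ℕ) : ℂ) * coeff (n - (a + 1)) w) := by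
    intro G w n hn
    rw [coeff_mul, Finset.Nat.sum_antidiagonal_eq_sum_range_succ
      (fun a b => coeff a (subst2 G w) * coeff b (X * w.derivativeFun))]
    simp_rw [coeff_X_mul_deriv]
    rw [Finset.sum_range_succ']
    rw [Nat.sub_zero, subst2_coeff_zero, add_comm]
  intro i
  induction i using Nat.strong_induction_on with
  | _ n IH =>
    intro hnm
    rcases Nat.eq_zero_or_pos n with rfl | hn1
    · rw [coeff_zero_eq_constantCoeff, hz, hzt]
    have IH' : ∀ k < n, coeff k z = coeff k zt := fun k hk => IH k hk (by omega)
    have e1 := congrArg (coeff n) hzeq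
    have e2 := congrArg (coeff n) hzteq
    rw [key g z n hn1] at e1
    rw [key gt zt n hn1, show fcoeff gt 0 0 = fcoeff g 0 0 from (hga 0 0 (by omega)).symm] at e2
    have hsum : ∑ a ∈ range n, coeff (a + 1) (subst2 g z)
          * (((n - (a + 1) : ℕ) : ℂ) * coeff (n - (a + 1)) z)
        = ∑ a ∈ range n, coeff (a + 1) (subst2 gt zt)
          * (((n - (a + 1) : ℕ) : ℂ) * coeff (n - (a + 1)) zt) := by
      refine Finset.sum_congr rfl fun a ha => ?_
      rw [Finset.mem_range] at ha
      by_cases hend : a + 1 = n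
      · rw [hend, Nat.sub_self]; simp
      · rw [subst2_coeff_congr hga hz hzt (by omega) (fun k hk => IH' k (by omega)),
          IH' (n - (a + 1)) (by omega)]
    have hR : coeff n (subst2 f z) - coeff n (subst2 ft zt)
        = fcoeff f 0 1 * (coeff n z - coeff n zt) := by
      simp only [subst2, coeff_mk]
      rw [← Finset.sum_sub_distrib]
      simp_rw [← Finset.sum_sub_distrib]
      have hterm : ∀ i ∈ range (n + 1), ∀ j ∈ range (n + 1),
          fcoeff f i j * coeff n (X ^ i * z ^ j : PowerSeries ℂ)
            - fcoeff ft i j * coeff n (X ^ i * zt ^ j : PowerSeries ℂ)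
          = if i = 0 ∧ j = 1 then fcoeff f 0 1 * (coeff n z - coeff n zt) else 0 := by
        intro i hi j hj
        by_cases hij0 : i = 0 ∧ j = 1
        · obtain ⟨rfl, rfl⟩ := hij0
          rw [if_pos ⟨rfl, rfl⟩, ← hfa 0 1 (by omega)]
          simp only [pow_zero, one_mul, pow_one]
          ring
        · rw [if_neg hij0]
          by_cases hijm : i + j ≤ m
          · rw [← hfa i j hijm]
            have hC : coeff n (X ^ i * z ^ j : PowerSeries ℂ)
                = coeff n (X ^ i * zt ^ j : PowerSeries ℂ) := by
              rw [coeff_X_pow_mul', coeff_X_pow_mul']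
              split_ifs with h
              · rcases Nat.lt_or_ge j 2 with hj2 | hj2
                · interval_cases j
                  · simp
                  · have hi0 : i ≠ 0 := fun h0 => hij0 ⟨h0, rfl⟩
                    simp only [pow_one]
                    exact IH' (n - i) (by omega)
                · by_cases hi0 : i = 0
                  · subst hi0; rw [Nat.sub_zero]
                    exact coeff_pow_ge_two hz hzt IH' hj2
                  · exact coeff_pow_congr (N := n - 1)
                      (fun k hk => IH' k (by omega)) j _ (by omega)
              · rfl
            rw [hC]; ring
          · rw [coeff_hi hz (by omega), coeff_hi hzt (by omega), mul_zero, mul_zero, sub_zero]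
      rw [Finset.sum_congr rfl (fun i hi => Finset.sum_congr rfl (hterm i hi))]
      simp [ite_and, Finset.sum_ite_eq', Finset.mem_range, hn1]
    have heq : ((n : ℂ) * fcoeff g 0 0 - fcoeff f 0 1) * (coeff n z - coeff n zt) = 0 := by
      linear_combination e1 - e2 - hsum + hR
    have hne : (n : ℂ) * fcoeff g 0 0 - fcoeff f 0 1 ≠ 0 := by
      intro h
      exact hlambda n hn1 (by rw [div_eq_iff hg]; linear_combination -h)
    rcases mul_eq_zero.mp heq with h | h
    · exact absurd h hne
    · exact sub_eq_zero.mp h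
end
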